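/- If a tree T of size λ with no branches of size κ⁺ is not κ-special (there is no function f: T → κ injective on chains), then the comparability graph of T has size λ, chromatic number exactly κ⁺, and has no K_{κ⁺} minor. -/

import Mathlib

universe u

open Cardinal

def Colorable' {V : Type u} (G : SimpleGraph V) (μ : Cardinal.{u}) : Prop :=
  ∃ (β : Type u) (c : V → β), #β ≤ μ ∧ ∀ ⦃x y : V⦄, G.Adj x y → c x ≠ c y

def ChromaticEq {V : Type u} (G : SimpleGraph V) (μ : Cardinal.{u}) : Prop :=
  Colorable' G μ ∧ ∀ ν : Cardinal.{u}, ν < μ → ¬ Colorable' G ν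

def HasCompleteMinor {V : Type u} (G : SimpleGraph V) (κ : Cardinal.{u}) : Prop :=
  ∃ (ι : Type u) (U : ι → Set V), #ι = κ ∧
    (∀ i, (U i).Nonempty) ∧
    (∀ i j, i ≠ j → Disjoint (U i) (U j)) ∧
    (∀ i, (G.induce (U i)).Connected) ∧
    (∀ i j, i ≠ j → ∃ x ∈ U i, ∃ y ∈ U j, G.Adj x y)

def IsSetTree (T : Type u) [PartialOrder T] : Prop :=
  ∀ t : T, IsWellOrder {s : T // s < t} (· < ·)

def compGraph (T : Type u) [PartialOrder T] : SimpleGraph T :=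
  SimpleGraph.fromRel (· ≤ ·)

def IsSpecialTree (T : Type u) [PartialOrder T] (κ : Cardinal.{u}) : Prop :=
  ∃ (β : Type u) (f : T → β), #β ≤ κ ∧ ∀ ⦃s t : T⦄, s < t → f s ≠ f t

def HasChainOfSize (T : Type u) [PartialOrder T] (κ : Cardinal.{u}) : Prop :=
  ∃ C : Set T, IsChain (· ≤ ·) C ∧ #C = κ

def HasAntichainOfSize (T : Type u) [PartialOrder T] (κ : Cardinal.{u}) : Prop :=
  ∃ A : Set T, IsAntichain (· ≤ ·) A ∧ #A = κ

def HasIndepOfSize {V : Type u} (G : SimpleGraph V) (κ : Cardinal.{u}) : Prop :=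
  ∃ S : Set V, #S = κ ∧ ∀ x ∈ S, ∀ y ∈ S, ¬ G.Adj x y

def AllChainsCountable (T : Type u) [PartialOrder T] : Prop :=
  ∀ C : Set T, IsChain (· ≤ ·) C → #C ≤ ℵ₀

noncomputable def nodeHeight {T : Type u} [PartialOrder T] (hT : IsSetTree T) (t : T) : Ordinal.{u} :=
  @Ordinal.type {s : T // s < t} (· < ·) (hT t)

def KappaLambdaConnected {V : Type u} (G : SimpleGraph V) (κ μ : Cardinal.{u}) : Prop :=
  ∀ S : Set V, #S < κ → (Sᶜ : Set V).Nonempty ∧ #((G.induce (Sᶜ : Set V)).ConnectedComponent) < μ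

def KappaConnected {V : Type u} (G : SimpleGraph V) (κ : Cardinal.{u}) : Prop :=
  κ ≤ #V ∧ ∀ S : Set V, #S < κ → (G.induce (Sᶜ : Set V)).Connected

def ContainsSubdivisionOfComplete {V : Type u} (G : SimpleGraph V) (κ : Cardinal.{u}) : Prop :=
  ∃ (ι : Type u) (v : ι → V), #ι = κ ∧ Function.Injective v ∧
    ∃ p : ∀ i j : ι, G.Walk (v i) (v j),
      (∀ i j, i ≠ j → (p i j).IsPath) ∧
      (∀ i j k l, i ≠ j → k ≠ l → (i, j) ≠ (k, l) → (i, j) ≠ (l, k) →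
        ∀ x, x ∈ (p i j).support → x ∈ (p k l).support → x ∈ Set.range v) ∧
      (∀ i j k, i ≠ j → v k ∈ (p i j).support → k = i ∨ k = j)

def IsTGraph {T : Type u} [PartialOrder T] (G : SimpleGraph T) : Prop :=
  (∀ ⦃s t⦄, G.Adj s t → s < t ∨ t < s) ∧
  (∀ t s : T, s < t → ∃ r, s ≤ r ∧ r < t ∧ G.Adj r t)

section Aux

variable {T : Type u} [PartialOrder T]

/-- In a set-tree, any two elements below a common element are comparable. -/
lemma tree_le_total (hT : IsSetTree T) {a b t : T} (ha : a ≤ t) (hb : b ≤ t) :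
    a ≤ b ∨ b ≤ a := by
  rcases eq_or_lt_of_le ha with rfl | ha'
  · exact Or.inr hb
  rcases eq_or_lt_of_le hb with rfl | hb'
  · exact Or.inl ha
  rcases @trichotomous _ (· < ·) (hT t).toTrichotomous ⟨a, ha'⟩ ⟨b, hb'⟩ with h | h | h
  · exact Or.inl (le_of_lt (Subtype.mk_lt_mk.mp h))
  · exact Or.inl (le_of_eq (congrArg Subtype.val h))
  · exact Or.inr (le_of_lt (Subtype.mk_lt_mk.mp h))

/-- Any nonempty subset of a set-tree which is bounded above has a least element. -/
lemma tree_exists_min (hT : IsSetTree T) {S : Set T} {t : T} (hne : S.Nonempty)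
    (hub : ∀ s ∈ S, s ≤ t) : ∃ m ∈ S, ∀ s ∈ S, m ≤ s := by
  by_cases h : (∃ x : {s : T // s < t}, x.1 ∈ S)
  · obtain ⟨m, hm, hmin⟩ := (hT t).toIsWellFounded.wf.has_min {x : {s : T // s < t} | x.1 ∈ S} h
    refine ⟨m.1, hm, ?_⟩
    intro s hs
    rcases eq_or_lt_of_le (hub s hs) with rfl | hs'
    · exact le_of_lt m.2
    · rcases @trichotomous _ (· < ·) (hT t).toTrichotomous (⟨s, hs'⟩ : {s : T // s < t}) m
        with h' | h' | h'
      · exact absurd h' (hmin ⟨s, hs'⟩ hs)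
      · exact le_of_eq (congrArg Subtype.val h').symm
      · exact le_of_lt (Subtype.coe_lt_coe.mpr h')
  · obtain ⟨s, hs⟩ := hne
    have hst : s = t := by
      rcases eq_or_lt_of_le (hub s hs) with rfl | h'
      · rfl
      · exact absurd ⟨⟨s, h'⟩, hs⟩ h
    refine ⟨s, hs, fun x hx => ?_⟩
    have hxt : x = t := by
      rcases eq_or_lt_of_le (hub x hx) with rfl | h'
      · rfl
      · exact absurd ⟨⟨x, h'⟩, hx⟩ h
    rw [hst, hxt]

/-- Along a walk in the induced comparability graph, endpoints have a common lower bound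
in the set. -/
lemma walk_lb (hT : IsSetTree T) {V : Set T} {x y : ↥V}
    (w : ((compGraph T).induce V).Walk x y) : ∃ z ∈ V, z ≤ (x : T) ∧ z ≤ (y : T) := by
  induction w with
  | nil => exact ⟨_, Subtype.coe_prop _, le_rfl, le_rfl⟩
  | @cons a b c h p ih =>
    obtain ⟨z, hzV, hzb, hzc⟩ := ih
    have h' : (a : T) ≠ (b : T) ∧ ((a : T) ≤ (b : T) ∨ (b : T) ≤ (a : T)) := by
      simpa [compGraph, SimpleGraph.fromRel_adj] using h
    rcases h'.2 with hab | hba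
    · rcases tree_le_total hT hzb hab with hz | hz
      · exact ⟨z, hzV, hz, hzc⟩
      · exact ⟨(a : T), a.2, le_rfl, le_trans hz hzc⟩
    · exact ⟨z, hzV, le_trans hzb hba, hzc⟩

/-- A connected set in the comparability graph of a set-tree has a minimum. -/
lemma connected_min (hT : IsSetTree T) {V : Set T}
    (hc : ((compGraph T).induce V).Connected) : ∃ m ∈ V, ∀ v ∈ V, m ≤ v := by
  obtain ⟨v₀⟩ := hc.nonempty
  have hdir : ∀ x ∈ V, ∃ z ∈ V, z ≤ x ∧ z ≤ (v₀ : T) := by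
    intro x hx
    exact (hc.preconnected ⟨x, hx⟩ v₀).elim fun w => walk_lb hT w
  obtain ⟨m, hmS, hmin⟩ := tree_exists_min hT (S := {z | z ∈ V ∧ z ≤ (v₀ : T)})
    ⟨(v₀ : T), v₀.2, le_rfl⟩ (fun s hs => hs.2)
  refine ⟨m, hmS.1, fun v hv => ?_⟩
  obtain ⟨z, hzV, hzv, hzv0⟩ := hdir v hv
  exact le_trans (hmin z ⟨hzV, hzv0⟩) hzv

/-- `nodeHeight` is strictly monotone. -/
lemma nodeHeight_strictMono (hT : IsSetTree T) {s t : T} (h : s < t) :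
    nodeHeight hT s < nodeHeight hT t := by
  haveI := hT t
  haveI := hT s
  let g : {r : T // r < s} → {r : T // r < t} := fun r => ⟨r.1, lt_trans r.2 h⟩
  have ginj : Function.Injective g := by
    intro a b hab
    have : (g a).1 = (g b).1 := congrArg Subtype.val hab
    exact Subtype.ext this
  let f : PrincipalSeg ((· < ·) : {r : T // r < s} → {r : T // r < s} → Prop)
      ((· < ·) : {r : T // r < t} → {r : T // r < t} → Prop) :=
    { toFun := g
      inj' := ginj
      map_rel_iff' := by
        intro a b
        show g a < g b ↔ a < b
        simp only [g, Subtype.mk_lt_mk, Subtype.coe_lt_coe]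
      top := ⟨s, h⟩
      mem_range_iff_rel' := by
        intro b
        constructor
        · rintro ⟨a, rfl⟩
          show g a < (⟨s, h⟩ : {r : T // r < t})
          simp only [g, Subtype.mk_lt_mk]
          exact a.2
        · intro hb
          have hb' : (b : T) < s := Subtype.coe_lt_coe.mpr hb
          refine ⟨⟨b.1, hb'⟩, ?_⟩
          show (⟨b.1, _⟩ : {r : T // r < t}) = b
          exact Subtype.ext rfl }
  exact f.ordinal_type_lt

end Aux

/-- if a tree of size λ with no branches of size κ⁺ is not κ-special,
then its comparability graph has size λ, chromatic number exactly κ⁺ and no K_{κ⁺} minor. -/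
theorem stmt4 (κ lam : Cardinal.{u}) (hκ : ℵ₀ ≤ κ)
    (T : Type u) [PartialOrder T] (hT : IsSetTree T)
    (hsize : #T = lam)
    (hbranch : ¬ HasChainOfSize T (Order.succ κ))
    (hns : ¬ IsSpecialTree T κ) :
    #T = lam ∧ ChromaticEq (compGraph T) (Order.succ κ) ∧
      ¬ HasCompleteMinor (compGraph T) (Order.succ κ) := by
  -- adjacency in the comparability graph
  have hadj_iff : ∀ x y : T, (compGraph T).Adj x y ↔ x ≠ y ∧ (x ≤ y ∨ y ≤ x) := by
    intro x y
    simp [compGraph, SimpleGraph.fromRel_adj]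
  -- all chains have size at most κ
  have hchain : ∀ C : Set T, IsChain (· ≤ ·) C → #C ≤ κ := by
    intro C hC
    by_contra hlt
    push_neg at hlt
    have hle : Order.succ κ ≤ #C := Order.succ_le_of_lt hlt
    obtain ⟨p, hp⟩ := Cardinal.le_mk_iff_exists_set.mp hle
    refine hbranch ⟨Subtype.val '' p, ?_, ?_⟩
    · intro a ha b hb hab
      obtain ⟨⟨a', ha'⟩, _, rfl⟩ := ha
      obtain ⟨⟨b', hb'⟩, _, rfl⟩ := hb
      exact hC ha' hb' hab
    · rw [Cardinal.mk_image_eq Subtype.val_injective, hp]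
  -- heights are below ord (succ κ)
  have hIio : ∀ t : T, IsChain (· ≤ ·) (Set.Iio t) := by
    intro t a ha b hb hab
    exact tree_le_total hT (le_of_lt ha) (le_of_lt hb)
  have hHeight : ∀ t : T, nodeHeight hT t < (Order.succ κ).ord := by
    intro t
    rw [Cardinal.lt_ord]
    have hcard : (nodeHeight hT t).card = #(Set.Iio t) :=
      @Ordinal.card_type _ (· < ·) (hT t)
    rw [hcard]
    exact lt_of_le_of_lt (hchain _ (hIio t)) (Order.lt_succ κ)
  refine ⟨hsize, ⟨?_, ?_⟩, ?_⟩
  · -- Colorable' with succ κ colors, via heights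
    refine ⟨((Order.succ κ).ord).ToType,
      fun t => (Ordinal.ToType.mk) ⟨nodeHeight hT t, hHeight t⟩, ?_, ?_⟩
    · rw [Cardinal.mk_ord_toType]
    · intro x y hxy heq
      obtain ⟨hne, hle⟩ := (hadj_iff x y).mp hxy
      have hne' : nodeHeight hT x ≠ nodeHeight hT y := by
        rcases hle with h | h
    -- x < y or y < x
        · exact ne_of_lt (nodeHeight_strictMono hT (lt_of_le_of_ne h hne))
        · exact (ne_of_lt (nodeHeight_strictMono hT (lt_of_le_of_ne h (Ne.symm hne)))).symm
      exact hne' (congrArg Subtype.val ((Ordinal.ToType.mk).injective heq))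
  · -- no coloring with fewer colors
    intro ν hν ⟨β, c, hβ, hc⟩
    refine hns ⟨β, c, le_trans hβ (Order.lt_succ_iff.mp hν), ?_⟩
    intro s t hst
    exact hc ((hadj_iff s t).mpr ⟨ne_of_lt hst, Or.inl (le_of_lt hst)⟩)
  · -- no K_{succ κ} minor
    rintro ⟨ι, U, hcard, hne, hdisj, hconn, hadjU⟩
    choose m hmU hmin using fun i => connected_min hT (hconn i)
    have hinj : Function.Injective m := by
      intro i j hij
      by_contra hne'
      exact (hdisj i j hne').ne_of_mem (hmU i) (hmU j) hij
    have hcomp : ∀ i j : ι, i ≠ j → m i ≤ m j ∨ m j ≤ m i := by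
      intro i j hij
      obtain ⟨x, hx, y, hy, hxy⟩ := hadjU i j hij
      obtain ⟨-, hle⟩ := (hadj_iff x y).mp hxy
      rcases hle with h | h
      · exact tree_le_total hT (le_trans (hmin i x hx) h) (hmin j y hy)
      · exact tree_le_total hT (hmin i x hx) (le_trans (hmin j y hy) h)
    apply hbranch
    refine ⟨Set.range m, ?_, ?_⟩
    · rintro _ ⟨i, rfl⟩ _ ⟨j, rfl⟩ hne'
      exact hcomp i j (fun h => hne' (congrArg m h))
    · rw [Cardinal.mk_range_eq _ hinj, hcard]
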